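/- arXiv:2204.09746 — 2 statements merged into one kernel-verified Lean document; each statement's English description precedes it below -/
import Mathlib

section
/- Suppose F : ℝ^m × ℝ^n → ℝ is differentiable, the partial gradient ∇_u F(u,v) is L_u-Lipschitz in u and L_uv-Lipschitz in v, and ∇_v F(u,v) is L_v-Lipschitz in v and L_vu-Lipschitz in u, with L_u, L_v > 0. Let χ = max(L_uv, L_vu)/√(L_u·L_v). Then for all u, u', v, v': F(u',v') - F(u,v) ≤ ⟨∇_u F(u,v), u'-u⟩ + ((1+χ)L_u/2)‖u'-u‖² + ⟨∇_v F(u,v), v'-v⟩ + ((1+χ)L_v/2)‖v'-v‖². -/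
open Set

lemma descent_lemma {E : Type*} [NormedAddCommGroup E] [InnerProductSpace ℝ E] [CompleteSpace E]
    (f : E → ℝ) (g : E → E) (L : ℝ) (hL : 0 ≤ L)
    (hg : ∀ x, HasGradientAt f (g x) x)
    (hlip : ∀ x y, ‖g x - g y‖ ≤ L * ‖x - y‖) (x y : E) :
    f y - f x ≤ (inner ℝ (g x) (y - x) : ℝ) + L / 2 * ‖y - x‖ ^ 2 := by
  set d := y - x with hd
  have hpath : ∀ t : ℝ, HasDerivAt (fun t : ℝ => f (x + t • d))
      (inner ℝ (g (x + t • d)) d : ℝ) t := by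
    intro t
    have h1 : HasDerivAt (fun t : ℝ => x + t • d) d t := by
      simpa using ((hasDerivAt_id t).smul_const d).const_add x
    have h2 := (hg (x + t • d)).hasFDerivAt.comp_hasDerivAt t h1
    rw [InnerProductSpace.toDual_apply_apply] at h2; exact h2
  set ψ : ℝ → ℝ := fun t => f (x + t • d) - t * inner ℝ (g x) d - L * t ^ 2 / 2 * ‖d‖ ^ 2
    with hψ
  have hψd : ∀ t : ℝ, HasDerivAt ψ
      ((inner ℝ (g (x + t • d)) d : ℝ) - inner ℝ (g x) d - L * t * ‖d‖ ^ 2) t := by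
    intro t
    have h1 : HasDerivAt (fun t : ℝ => t * (inner ℝ (g x) d : ℝ)) (inner ℝ (g x) d : ℝ) t := by
      simpa using (hasDerivAt_id t).mul_const (inner ℝ (g x) d : ℝ)
    have h2 : HasDerivAt (fun t : ℝ => L * t ^ 2 / 2 * ‖d‖ ^ 2) (L * t * ‖d‖ ^ 2) t := by
      have := ((hasDerivAt_pow 2 t).const_mul L).div_const 2 |>.mul_const (‖d‖ ^ 2)
      refine this.congr_deriv ?_
      ring
    exact ((hpath t).sub h1).sub h2
  have hmono : AntitoneOn ψ (Icc 0 1) := by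
    apply antitoneOn_of_deriv_nonpos (convex_Icc 0 1)
    · exact Continuous.continuousOn (by
        have : Continuous ψ := by
          have : Differentiable ℝ ψ := fun t => (hψd t).differentiableAt
          exact Differentiable.continuous this
        exact this)
    · intro t ht
      exact ((hψd t).differentiableAt).differentiableWithinAt
    · intro t ht
      rw [interior_Icc] at ht
      rw [(hψd t).deriv]
      have h1 : (inner ℝ (g (x + t • d)) d : ℝ) - inner ℝ (g x) d
          = inner ℝ (g (x + t • d) - g x) d := by rw [inner_sub_left]
      rw [h1]
      have h2 : (inner ℝ (g (x + t • d) - g x) d : ℝ) ≤ ‖g (x + t • d) - g x‖ * ‖d‖ :=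
        real_inner_le_norm _ _
      have h3 : ‖g (x + t • d) - g x‖ ≤ L * (t * ‖d‖) := by
        have := hlip (x + t • d) x
        simpa [norm_smul, abs_of_pos ht.1, mul_assoc] using this
      nlinarith [norm_nonneg d, ht.1.le, norm_nonneg (g (x + t • d) - g x)]
  have := hmono (left_mem_Icc.mpr zero_le_one) (right_mem_Icc.mpr zero_le_one) zero_le_one
  simp only [hψ, zero_smul, add_zero, one_smul, zero_mul, sub_zero, zero_pow, mul_zero,
    zero_div, one_pow, mul_one] at this
  have hxy : x + d = y := by simp [hd]
  rw [hxy] at this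
  linarith

/-- Lemma 1 (smoothness decomposition) of the PMA-FL convergence analysis. -/
theorem stmt_1 {m n : ℕ}
    (F : EuclideanSpace ℝ (Fin m) → EuclideanSpace ℝ (Fin n) → ℝ)
    (gu : EuclideanSpace ℝ (Fin m) → EuclideanSpace ℝ (Fin n) → EuclideanSpace ℝ (Fin m))
    (gv : EuclideanSpace ℝ (Fin m) → EuclideanSpace ℝ (Fin n) → EuclideanSpace ℝ (Fin n))
    (Lu Lv Luv Lvu : ℝ) (hLu : 0 < Lu) (hLv : 0 < Lv) (hLuv : 0 ≤ Luv) (hLvu : 0 ≤ Lvu)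
    (hgu : ∀ u v, HasGradientAt (fun u' => F u' v) (gu u v) u)
    (hgv : ∀ u v, HasGradientAt (fun v' => F u v') (gv u v) v)
    (huu : ∀ u u' v, ‖gu u v - gu u' v‖ ≤ Lu * ‖u - u'‖)
    (huv : ∀ u v v', ‖gu u v - gu u v'‖ ≤ Luv * ‖v - v'‖)
    (hvv : ∀ u v v', ‖gv u v - gv u v'‖ ≤ Lv * ‖v - v'‖)
    (hvu : ∀ u u' v, ‖gv u v - gv u' v‖ ≤ Lvu * ‖u - u'‖)
    (χ : ℝ) (hχ : χ = max Luv Lvu / Real.sqrt (Lu * Lv)) :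
    ∀ u u' v v',
      F u' v' - F u v ≤
        (inner ℝ (gu u v) (u' - u) : ℝ) + (1 + χ) * Lu / 2 * ‖u' - u‖ ^ 2 +
          (inner ℝ (gv u v) (v' - v) : ℝ) + (1 + χ) * Lv / 2 * ‖v' - v‖ ^ 2 := by
  intro u u' v v'
  set s := Real.sqrt (Lu * Lv) with hs
  have hspos : 0 < s := Real.sqrt_pos.mpr (mul_pos hLu hLv)
  have hχ0 : 0 ≤ χ := by
    rw [hχ]
    exact div_nonneg (le_trans hLuv (le_max_left _ _)) hspos.le
  have hLuvχ : Luv ≤ χ * s := by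
    rw [hχ, div_mul_cancel₀ _ hspos.ne']
    exact le_max_left _ _
  -- descent in v at fixed u
  have h2 : F u v' - F u v ≤ (inner ℝ (gv u v) (v' - v) : ℝ) + Lv / 2 * ‖v' - v‖ ^ 2 :=
    descent_lemma (fun w => F u w) (gv u) Lv hLv.le (hgv u)
      (fun a b => hvv u a b) v v'
  -- descent in u at fixed v'
  have h1 : F u' v' - F u v' ≤ (inner ℝ (gu u v') (u' - u) : ℝ) + Lu / 2 * ‖u' - u‖ ^ 2 :=
    descent_lemma (fun w => F w v') (fun w => gu w v') Lu hLu.le (fun w => hgu w v')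
      (fun a b => huu a b v') u u'
  -- cross term
  have h3 : (inner ℝ (gu u v') (u' - u) : ℝ)
      ≤ (inner ℝ (gu u v) (u' - u) : ℝ) + Luv * ‖v' - v‖ * ‖u' - u‖ := by
    have e : (inner ℝ (gu u v') (u' - u) : ℝ)
        = inner ℝ (gu u v) (u' - u) + (inner ℝ (gu u v' - gu u v) (u' - u) : ℝ) := by
      rw [inner_sub_left]; ring
    rw [e]
    have := real_inner_le_norm (gu u v' - gu u v) (u' - u)
    have hl := huv u v' v
    nlinarith [norm_nonneg (u' - u)]
  have hAM : s * ‖v' - v‖ * ‖u' - u‖ ≤ (Lu * ‖u' - u‖ ^ 2 + Lv * ‖v' - v‖ ^ 2) / 2 := by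
    have hsu : Real.sqrt Lu ^ 2 = Lu := Real.sq_sqrt hLu.le
    have hsv : Real.sqrt Lv ^ 2 = Lv := Real.sq_sqrt hLv.le
    have hsm : s = Real.sqrt Lu * Real.sqrt Lv := Real.sqrt_mul hLu.le _
    rw [hsm]
    nlinarith [sq_nonneg (Real.sqrt Lu * ‖u' - u‖ - Real.sqrt Lv * ‖v' - v‖)]
  have h4 : Luv * ‖v' - v‖ * ‖u' - u‖
      ≤ χ * Lu / 2 * ‖u' - u‖ ^ 2 + χ * Lv / 2 * ‖v' - v‖ ^ 2 := by
    have hprod : 0 ≤ ‖v' - v‖ * ‖u' - u‖ := mul_nonneg (norm_nonneg _) (norm_nonneg _)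
    nlinarith [mul_le_mul_of_nonneg_right hLuvχ hprod, mul_le_mul_of_nonneg_left hAM hχ0]
  nlinarith
end

section
/- The function f(T) = T·(2^{Q/T} − 1) is convex and non-increasing on (0, ∞) for any constant Q > 0. -/
open Real Set

private lemma hderiv1 (c x : ℝ) (hx : x ≠ 0) :
    HasDerivAt (fun T : ℝ => T * (Real.exp (c / T) - 1))
      (Real.exp (c / x) * (1 - c / x) - 1) x := by
  have h1 : HasDerivAt (fun T : ℝ => c / T) (-(c / x ^ 2)) x := by
    simpa [div_eq_mul_inv, mul_comm, mul_assoc, neg_mul, mul_neg] using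
      (hasDerivAt_inv hx).const_mul c
  have h2 := h1.exp
  have h4 := (hasDerivAt_id x).mul (h2.sub_const 1)
  refine h4.congr_deriv ?_
  simp only [id]
  field_simp
  ring

private lemma hderiv2 (c x : ℝ) (hx : x ≠ 0) :
    HasDerivAt (fun T : ℝ => Real.exp (c / T) * (1 - c / T) - 1)
      (Real.exp (c / x) * (c ^ 2 / x ^ 3)) x := by
  have h1 : HasDerivAt (fun T : ℝ => c / T) (-(c / x ^ 2)) x := by
    simpa [div_eq_mul_inv, mul_comm, mul_assoc, neg_mul, mul_neg] using
      (hasDerivAt_inv hx).const_mul c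
  have h2 := h1.exp
  have h5 : HasDerivAt (fun T : ℝ => 1 - c / T) (c / x ^ 2) x := by
    simpa using (h1.const_sub 1)
  have h6 := (h2.mul h5).sub_const 1
  refine h6.congr_deriv ?_
  field_simp
  ring

/-- The uplink-energy profile `T ↦ T (2^{Q/T} − 1)` is convex and non-increasing on `(0, ∞)`. -/
theorem stmt_8 (Q : ℝ) (hQ : 0 < Q) :
    ConvexOn ℝ (Set.Ioi (0 : ℝ)) (fun T => T * ((2 : ℝ) ^ (Q / T) - 1)) ∧
      AntitoneOn (fun T => T * ((2 : ℝ) ^ (Q / T) - 1)) (Set.Ioi (0 : ℝ)) := by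
  set c : ℝ := Real.log 2 * Q with hc
  have hc0 : 0 < c := mul_pos (Real.log_pos one_lt_two) hQ
  have hfun : (fun T : ℝ => T * ((2 : ℝ) ^ (Q / T) - 1))
      = fun T : ℝ => T * (Real.exp (c / T) - 1) := by
    funext T
    rw [Real.rpow_def_of_pos two_pos, hc, mul_div_assoc]
  rw [hfun]
  have hint : interior (Set.Ioi (0 : ℝ)) = Set.Ioi 0 := interior_Ioi
  have hdiff : ∀ x ∈ Set.Ioi (0 : ℝ),
      HasDerivAt (fun T : ℝ => T * (Real.exp (c / T) - 1))
        (Real.exp (c / x) * (1 - c / x) - 1) x :=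
    fun x hx => hderiv1 c x (ne_of_gt hx)
  have hcont : ContinuousOn (fun T : ℝ => T * (Real.exp (c / T) - 1)) (Set.Ioi 0) :=
    fun x hx => (hdiff x hx).continuousAt.continuousWithinAt
  constructor
  · refine convexOn_of_hasDerivWithinAt2_nonneg (convex_Ioi 0) hcont
      (f' := fun x => Real.exp (c / x) * (1 - c / x) - 1)
      (f'' := fun x => Real.exp (c / x) * (c ^ 2 / x ^ 3)) ?_ ?_ ?_
    · intro x hx
      rw [hint] at hx ⊢
      exact (hdiff x hx).hasDerivWithinAt
    · intro x hx
      rw [hint] at hx ⊢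
      exact (hderiv2 c x (ne_of_gt hx)).hasDerivWithinAt
    · intro x hx
      rw [hint] at hx
      have hx0 : (0:ℝ) < x := hx
      positivity
  · refine antitoneOn_of_deriv_nonpos (convex_Ioi 0) hcont ?_ ?_
    · rw [hint]
      exact fun x hx => ((hdiff x hx).differentiableAt).differentiableWithinAt
    · intro x hx
      rw [hint] at hx
      have hx0 : (0:ℝ) < x := hx
      rw [(hdiff x hx).deriv]
      have hy : (1 : ℝ) - c / x ≤ Real.exp (-(c / x)) := by
        have := Real.add_one_le_exp (-(c / x))
        linarith
      have := mul_le_mul_of_nonneg_left hy (Real.exp_nonneg (c / x))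
      rw [← Real.exp_add] at this
      simp at this
      linarith
end
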